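/- Let x, y ∈ ℂⁿ be unit vectors with x*y real. Then for every Hermitian matrix H with spectral norm ‖H‖ ≤ 1, |Im(y*Hx)| ≤ √(1 − |y*x|²). -/

import Mathlib

open Matrix

/-- The spectral (operator 2-) norm of a complex matrix. -/
noncomputable def specNorm {n : ℕ} (A : Matrix (Fin n) (Fin n) ℂ) : ℝ :=
  ‖Matrix.toEuclideanCLM (𝕜 := ℂ) A‖

theorem hermitian_imaginary_part_bound {n : ℕ} (x y : EuclideanSpace ℂ (Fin n))
    (hx : ‖x‖ = 1) (hy : ‖y‖ = 1)
    (hreal : (star (x : Fin n → ℂ) ⬝ᵥ (y : Fin n → ℂ)).im = 0)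
    (H : Matrix (Fin n) (Fin n) ℂ) (hH : Hᴴ = H) (hnorm : specNorm H ≤ 1) :
    |(star (y : Fin n → ℂ) ⬝ᵥ H.mulVec (x : Fin n → ℂ)).im| ≤
      Real.sqrt (1 - ‖star (y : Fin n → ℂ) ⬝ᵥ (x : Fin n → ℂ)‖ ^ 2) := by
  set T := Matrix.toEuclideanCLM (𝕜 := ℂ) H with hT
  have hstar : star T = T := by
    rw [hT, ← map_star]
    exact congrArg _ hH
  have hsa : ContinuousLinearMap.adjoint T = T := by
    rw [← ContinuousLinearMap.star_eq_adjoint, hstar]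
  have hTx : (star (y : Fin n → ℂ) ⬝ᵥ H.mulVec (x : Fin n → ℂ)) = inner ℂ y (T x) := by
    rw [EuclideanSpace.inner_eq_star_dotProduct, dotProduct_comm]; rfl
  have hyx : (star (y : Fin n → ℂ) ⬝ᵥ (x : Fin n → ℂ)) = (inner ℂ y x : ℂ) := by
    rw [EuclideanSpace.inner_eq_star_dotProduct, dotProduct_comm]
  have hxy : (star (x : Fin n → ℂ) ⬝ᵥ (y : Fin n → ℂ)) = (inner ℂ x y : ℂ) := by
    rw [EuclideanSpace.inner_eq_star_dotProduct, dotProduct_comm]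
  rw [hxy] at hreal
  set c : ℝ := (inner ℂ y x : ℂ).re with hc
  have hyxc : (inner ℂ y x : ℂ) = (c : ℂ) := by
    have him : (inner ℂ y x : ℂ).im = 0 := by
      have h2 := congrArg Complex.im (inner_conj_symm (𝕜 := ℂ) x y)
      rw [Complex.conj_im] at h2
      linarith
    exact Complex.ext rfl him
  have hself : (inner ℂ x (T x) : ℂ).im = 0 := by
    have h1 : (inner ℂ x (T x) : ℂ) = starRingEnd ℂ (inner ℂ x (T x) : ℂ) := by
      conv_lhs => rw [← hsa]
      rw [ContinuousLinearMap.adjoint_inner_right]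
      exact (inner_conj_symm (T x) x).symm
    have h2 := congrArg Complex.im h1
    rw [Complex.conj_im] at h2
    linarith
  have key : (inner ℂ y (T x) : ℂ).im = (inner ℂ (y - (c : ℂ) • x) (T x) : ℂ).im := by
    rw [inner_sub_left, inner_smul_left, Complex.sub_im, Complex.mul_im]
    rw [Complex.conj_re, Complex.conj_im, Complex.ofReal_re, Complex.ofReal_im, hself]
    ring
  have hTxnorm : ‖T x‖ ≤ 1 := by
    calc ‖T x‖ ≤ ‖T‖ * ‖x‖ := T.le_opNorm x
    _ ≤ 1 := by rw [hx, mul_one]; exact hnorm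
  have hnormsub : ‖y - (c : ℂ) • x‖ = Real.sqrt (1 - c ^ 2) := by
    have h2 : ‖y - (c : ℂ) • x‖ ^ 2 = 1 - c ^ 2 := by
      rw [@norm_sub_sq ℂ, inner_smul_right, hyxc, norm_smul, hx, hy]
      rw [← Complex.ofReal_mul]
      simp [Complex.norm_real, sq_abs]
      ring
    rw [← h2, Real.sqrt_sq (norm_nonneg _)]
  have cs : ‖(inner ℂ (y - (c : ℂ) • x) (T x) : ℂ)‖ ≤ Real.sqrt (1 - c ^ 2) := by
    calc ‖(inner ℂ (y - (c : ℂ) • x) (T x) : ℂ)‖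
        ≤ ‖y - (c : ℂ) • x‖ * ‖T x‖ := norm_inner_le_norm _ _
      _ ≤ Real.sqrt (1 - c ^ 2) * 1 :=
          mul_le_mul (le_of_eq hnormsub) hTxnorm (norm_nonneg _) (Real.sqrt_nonneg _)
      _ = _ := mul_one _
  have habs : ‖star (y : Fin n → ℂ) ⬝ᵥ (x : Fin n → ℂ)‖ ^ 2 = c ^ 2 := by
    rw [hyx, hyxc, Complex.norm_real, Real.norm_eq_abs, sq_abs]
  rw [hTx, habs, key]
  calc |(inner ℂ (y - (c : ℂ) • x) (T x) : ℂ).im|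
      ≤ ‖(inner ℂ (y - (c : ℂ) • x) (T x) : ℂ)‖ := Complex.abs_im_le_norm _
    _ ≤ Real.sqrt (1 - c ^ 2) := by exact cs
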